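/- Let l, s, t be positive integers, let G be a graph, and let 𝔠 = (S, 𝓛) be an (s, l + (st)^t)-constellation in G. Then either G contains K_t or K_{t,t} as an induced subgraph, or there exists 𝓛' ⊆ 𝓛 with |𝓛'| = l such that (S, 𝓛') is a t-meager (s, l)-constellation in G (every vertex lying on a path of 𝓛' has at most t neighbors in S). -/

import Mathlib

open SimpleGraph

universe u

variable {V : Type u}

structure IndPath (G : SimpleGraph V) where
  n : ℕ
  npos : 0 < n
  f : Fin n → V
  inj : Function.Injective f
  adj : ∀ i j : Fin n, G.Adj (f i) (f j) ↔ ((i : ℕ) + 1 = j ∨ (j : ℕ) + 1 = i)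

def IndPath.verts {G : SimpleGraph V} (L : IndPath G) : Set V := Set.range L.f

def IndPath.length {G : SimpleGraph V} (L : IndPath G) : ℕ := L.n - 1

structure IndCycle (G : SimpleGraph V) where
  n : ℕ
  hn : 3 ≤ n
  f : ZMod n → V
  inj : Function.Injective f
  adj : ∀ i j : ZMod n, G.Adj (f i) (f j) ↔ (i = j + 1 ∨ j = i + 1)

def Pinched (c h : ℕ) (G : SimpleGraph V) : Prop :=
  ¬ ∃ (x : V) (C : Fin c → IndCycle G),
      (∀ i, h + 2 ≤ (C i).n) ∧
      (∀ i, (C i).f 0 = x) ∧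
      (∀ i j : Fin c, i ≠ j →
        (Set.range (C i).f ∩ Set.range (C j).f = {x}) ∧
        (∀ u ∈ Set.range (C i).f, ∀ v ∈ Set.range (C j).f,
          u ≠ x → v ≠ x → ¬ G.Adj u v))

structure Constellation (G : SimpleGraph V) (s l : ℕ) where
  S : Finset V
  card_S : S.card = s
  stable : ∀ x ∈ S, ∀ y ∈ S, ¬ G.Adj x y
  P : Fin l → IndPath G
  disj : ∀ i j : Fin l, i ≠ j → Disjoint (P i).verts (P j).verts
  sep : ∀ x ∈ S, ∀ i : Fin l, x ∉ (P i).verts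
  nbr : ∀ x ∈ S, ∀ i : Fin l, ∃ v ∈ (P i).verts, G.Adj x v

def Constellation.Plain {G : SimpleGraph V} {s l : ℕ} (c : Constellation G s l) : Prop :=
  ∀ i j : Fin l, i ≠ j → ∀ u ∈ (c.P i).verts, ∀ v ∈ (c.P j).verts, ¬ G.Adj u v

def Constellation.Meager {G : SimpleGraph V} {s l : ℕ} (c : Constellation G s l) (d : ℕ) : Prop :=
  ∀ i : Fin l, ∀ p : Fin (c.P i).n, ((↑c.S : Set V) ∩ {x | G.Adj x ((c.P i).f p)}).ncard ≤ d

def Constellation.Hollow {G : SimpleGraph V} {s l : ℕ} (c : Constellation G s l) (h : ℕ) : Prop :=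
  ∀ x ∈ c.S, ∀ i : Fin l, ∀ p q : Fin (c.P i).n, (p : ℕ) < q →
    G.Adj x ((c.P i).f p) → G.Adj x ((c.P i).f q) →
    (∀ r : Fin (c.P i).n, (p : ℕ) < r → (r : ℕ) < q → ¬ G.Adj x ((c.P i).f r)) →
    (q : ℕ) - p < h

structure PathAlignment (G : SimpleGraph V) (s : ℕ) extends Constellation G s 1 where
  π : Fin s → V
  π_inj : Function.Injective π
  π_mem : ∀ i, π i ∈ S
  order : ∃ rev : Bool, ∀ i j : Fin s, i < j →
    ∀ p q : Fin (P 0).n, G.Adj (π i) ((P 0).f p) → G.Adj (π j) ((P 0).f q) →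
      (if rev then (q : ℕ) < p else (p : ℕ) < q)

structure PDArray (G : SimpleGraph V) (s h : ℕ) extends Constellation G s s where
  plain : toConstellation.Plain
  hollow : toConstellation.Hollow h
  π : Fin s → V
  π_inj : Function.Injective π
  π_mem : ∀ i, π i ∈ S
  aligned : ∀ k : Fin s, ∃ rev : Bool, ∀ i j : Fin s, i < j →
    ∀ p q : Fin (P k).n, G.Adj (π i) ((P k).f p) → G.Adj (π j) ((P k).f q) →
      (if rev then (q : ℕ) < p else (p : ℕ) < q)

def PDArray.verts {G : SimpleGraph V} {s h : ℕ} (A : PDArray G s h) : Set V :=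
  (↑A.S : Set V) ∪ ⋃ i : Fin s, (A.P i).verts

def IsMinor {W : Type*} (H : SimpleGraph W) (G : SimpleGraph V) : Prop :=
  ∃ B : W → Set V,
    (∀ w, (B w).Nonempty) ∧
    (∀ w, (G.induce (B w)).Connected) ∧
    (∀ w w' : W, w ≠ w' → Disjoint (B w) (B w')) ∧
    (∀ w w' : W, H.Adj w w' → ∃ u ∈ B w, ∃ v ∈ B w', G.Adj u v)

def TreewidthLe (G : SimpleGraph V) (w : ℕ) : Prop :=
  ∃ (ι : Type u) (T : SimpleGraph ι), T.IsAcyclic ∧ T.Connected ∧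
    ∃ t : V → Set ι,
      (∀ v, (t v).Nonempty) ∧
      (∀ v, (T.induce (t v)).Connected) ∧
      (∀ u v : V, G.Adj u v → (t u ∩ t v).Nonempty) ∧
      (∀ x : ι, {v : V | x ∈ t v}.ncard ≤ w + 1)

def PD (s : ℕ) : SimpleGraph (Fin s ⊕ Fin s × Fin s) :=
  SimpleGraph.fromRel (fun a b =>
    match a, b with
    | Sum.inr (i, k), Sum.inr (i', k') => i = i' ∧ (k : ℕ) + 1 = (k' : ℕ)
    | Sum.inl j, Sum.inr (_, k) => k = j
    | _, _ => False)

lemma myRamsey {V : Type u} (G : SimpleGraph V) :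
    ∀ n a b : ℕ, a + b ≤ n → ∀ F : Finset V, Nat.choose (a + b) a ≤ F.card →
      (∃ K ⊆ F, K.card = a + 1 ∧ (↑K : Set V).Pairwise G.Adj) ∨
      (∃ I ⊆ F, I.card = b + 1 ∧ ∀ x ∈ I, ∀ y ∈ I, ¬ G.Adj x y) := by
  classical
  intro n
  induction n with
  | zero =>
    intro a b hab F hF
    have ha : a = 0 := by omega
    subst ha
    obtain ⟨x, hx⟩ := Finset.card_pos.mp (lt_of_lt_of_le (Nat.choose_pos (Nat.zero_le _)) hF)
    exact Or.inl ⟨{x}, Finset.singleton_subset_iff.mpr hx, rfl, by simp⟩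
  | succ n ih =>
    intro a b hab F hF
    match a, b with
    | 0, b =>
      obtain ⟨x, hx⟩ := Finset.card_pos.mp (lt_of_lt_of_le (Nat.choose_pos (Nat.zero_le _)) hF)
      exact Or.inl ⟨{x}, Finset.singleton_subset_iff.mpr hx, rfl, by simp⟩
    | a+1, 0 =>
      obtain ⟨x, hx⟩ := Finset.card_pos.mp (lt_of_lt_of_le (Nat.choose_pos le_rfl) hF)
      refine Or.inr ⟨{x}, Finset.singleton_subset_iff.mpr hx, rfl, ?_⟩
      intro u hu v hv
      simp only [Finset.mem_singleton] at hu hv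
      subst hu; subst hv; exact G.irrefl
    | a+1, b+1 =>
      have e1 : a+1+(b+1) = (a+b+1)+1 := by omega
      have e2 : a+(b+1) = a+b+1 := by omega
      have e3 : a+1+b = a+b+1 := by omega
      have hF' : Nat.choose (a+b+1) a + Nat.choose (a+b+1) (a+1) ≤ F.card := by
        rw [e1, Nat.choose_succ_succ'] at hF; exact hF
      have hc1 : 0 < Nat.choose (a+b+1) a := Nat.choose_pos (by omega)
      have hFpos : 0 < F.card := by omega
      obtain ⟨x, hx⟩ := Finset.card_pos.mp hFpos
      set Nb := (F.erase x).filter (fun y => G.Adj x y) with hNb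
      set Mb := (F.erase x).filter (fun y => ¬ G.Adj x y) with hMb
      have hNbF : Nb ⊆ F := (Finset.filter_subset _ _).trans (Finset.erase_subset _ _)
      have hMbF : Mb ⊆ F := (Finset.filter_subset _ _).trans (Finset.erase_subset _ _)
      have hsum : Nb.card + Mb.card = F.card - 1 := by
        rw [hNb, hMb, Finset.card_filter_add_card_filter_not,
          Finset.card_erase_of_mem hx]
      rcases le_or_gt (Nat.choose (a+b+1) a) Nb.card with hN | hN
      · rcases ih a (b+1) (by omega) Nb (by rw [e2]; exact hN) with
          ⟨K, hKsub, hKcard, hKp⟩ | ⟨I, hIsub, hIcard, hIind⟩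
        · left
          have hxK : x ∉ K := fun h =>
            Finset.notMem_erase x F (Finset.filter_subset _ _ (hKsub h))
          refine ⟨insert x K, ?_, ?_, ?_⟩
          · intro y hy
            rcases Finset.mem_insert.mp hy with rfl | hy
            · exact hx
            · exact hNbF (hKsub hy)
          · rw [Finset.card_insert_of_notMem hxK, hKcard]
          · rw [Finset.coe_insert, (haveI : Std.Symm G.Adj := G.symm; Set.pairwise_insert_of_symm)]
            refine ⟨hKp, fun y hy _ => ?_⟩
            exact (Finset.mem_filter.mp (hKsub hy)).2
        · exact Or.inr ⟨I, hIsub.trans hNbF, hIcard, hIind⟩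
      · have hM : Nat.choose (a+b+1) (a+1) ≤ Mb.card := by omega
        rcases ih (a+1) b (by omega) Mb (by rw [e3]; exact hM) with
          ⟨K, hKsub, hKcard, hKp⟩ | ⟨I, hIsub, hIcard, hIind⟩
        · exact Or.inl ⟨K, hKsub.trans hMbF, hKcard, hKp⟩
        · right
          have hxI : x ∉ I := fun h =>
            Finset.notMem_erase x F (Finset.filter_subset _ _ (hIsub h))
          refine ⟨insert x I, ?_, ?_, ?_⟩
          · intro y hy
            rcases Finset.mem_insert.mp hy with rfl | hy
            · exact hx
            · exact hMbF (hIsub hy)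
          · rw [Finset.card_insert_of_notMem hxI, hIcard]
          · intro u hu v hv hadj
            have hMb' : ∀ w ∈ I, ¬ G.Adj x w := fun w hw =>
              (Finset.mem_filter.mp (hIsub hw)).2
            rcases Finset.mem_insert.mp hu with h1 | h1 <;>
              rcases Finset.mem_insert.mp hv with h2 | h2
            · rw [h1, h2] at hadj; exact G.irrefl hadj
            · rw [h1] at hadj; exact hMb' v h2 hadj
            · rw [h2] at hadj; exact hMb' u h1 hadj.symm
            · exact hIind u h1 v h2 hadj

lemma four_pow_le_self_pow (t : ℕ) (ht : 0 < t) : 4 ^ (t - 1) ≤ t ^ t := by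
  rcases le_or_gt t 3 with h | h
  · interval_cases t <;> norm_num
  · calc 4 ^ (t - 1) ≤ t ^ (t - 1) := Nat.pow_le_pow_left (by omega) _
      _ ≤ t ^ t := Nat.pow_le_pow_right (by omega) (by omega)

/-- Lemma 4.5: given an `(s, l + (st)^t)`-constellation in `G`, either `G`
contains `K_t` or `K_{t,t}` (as induced subgraphs), or some `l` of the paths
form with `S` a `t`-meager `(s, l)`-constellation. -/
theorem stmt9 (l s t : ℕ) (hl : 0 < l) (hs : 0 < s) (ht : 0 < t)
    (V : Type u) (G : SimpleGraph V)
    (c₀ : Constellation G s (l + (s * t) ^ t)) :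
    (∃ K : Finset V, G.IsClique (↑K : Set V) ∧ K.card = t) ∨
    (∃ A B : Finset V, Disjoint A B ∧ A.card = t ∧ B.card = t ∧
      (∀ x ∈ A, ∀ y ∈ A, ¬ G.Adj x y) ∧ (∀ x ∈ B, ∀ y ∈ B, ¬ G.Adj x y) ∧
      (∀ x ∈ A, ∀ y ∈ B, G.Adj x y)) ∨
    (∃ σ : Fin l ↪ Fin (l + (s * t) ^ t), ∃ c : Constellation G s l,
      c.S = c₀.S ∧ (∀ i : Fin l, c.P i = c₀.P (σ i)) ∧ c.Meager t) := by
  classical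
  set good : Finset (Fin (l + (s * t) ^ t)) :=
    Finset.univ.filter (fun i => ∀ p : Fin (c₀.P i).n,
      (c₀.S.filter (fun x => G.Adj x ((c₀.P i).f p))).card ≤ t) with hgooddef
  have hdeg : ∀ w : V, ((↑c₀.S : Set V) ∩ {x | G.Adj x w}).ncard
      = (c₀.S.filter (fun x => G.Adj x w)).card := by
    intro w
    rw [← Set.ncard_coe_finset]
    congr 1
    ext x
    simp [Set.mem_inter_iff]
  by_cases hgood : l ≤ good.card
  · obtain ⟨g, hg, hgcard⟩ := Finset.exists_subset_card_eq hgood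
    let σ : Fin l ↪ Fin (l + (s * t) ^ t) :=
      (g.orderIsoOfFin hgcard).toEquiv.toEmbedding.trans (Function.Embedding.subtype _)
    have hσ : ∀ i, σ i ∈ good := fun i => hg (g.orderIsoOfFin hgcard i).2
    refine Or.inr (Or.inr ⟨σ, ⟨c₀.S, c₀.card_S, c₀.stable, fun i => c₀.P (σ i),
      fun i j hij => c₀.disj _ _ (fun e => hij (σ.injective e)),
      fun x hx i => c₀.sep x hx (σ i),
      fun x hx i => c₀.nbr x hx (σ i)⟩, rfl, fun _ => rfl, ?_⟩)
    intro i p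
    show ((↑c₀.S : Set V) ∩ {x | G.Adj x ((c₀.P (σ i)).f p)}).ncard ≤ t
    rw [hdeg]
    exact (Finset.mem_filter.mp (hσ i)).2 p
  · push_neg at hgood
    have hcard : (s * t) ^ t + 1 ≤ goodᶜ.card := by
      rw [Finset.card_compl, Fintype.card_fin]
      omega
    have hch : ∀ i : Fin (l + (s * t) ^ t), ∃ (T : Finset V) (v : V), i ∈ goodᶜ →
        T ⊆ c₀.S ∧ T.card = t ∧ v ∈ (c₀.P i).verts ∧ ∀ x ∈ T, G.Adj x v := by
      intro i
      by_cases hi : i ∈ goodᶜ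
      · have hi' := Finset.mem_compl.mp hi
        rw [hgooddef] at hi'
        simp only [Finset.mem_filter, Finset.mem_univ, true_and, not_forall, not_le] at hi'
        obtain ⟨p, hp⟩ := hi'
        obtain ⟨T, hTsub, hTcard⟩ := Finset.exists_subset_card_eq (le_of_lt hp)
        exact ⟨T, (c₀.P i).f p, fun _ =>
          ⟨fun x hx => (Finset.mem_filter.mp (hTsub hx)).1, hTcard,
            ⟨p, rfl⟩, fun x hx => (Finset.mem_filter.mp (hTsub hx)).2⟩⟩
      · exact ⟨∅, (c₀.P i).f ⟨0, (c₀.P i).npos⟩, fun h => absurd h hi⟩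
    choose T v hTv using hch
    have hmaps : ∀ i ∈ goodᶜ, T i ∈ c₀.S.powersetCard t := fun i hi =>
      Finset.mem_powersetCard.mpr ⟨(hTv i hi).1, (hTv i hi).2.1⟩
    have hlt : (c₀.S.powersetCard t).card * t ^ t < goodᶜ.card := by
      rw [Finset.card_powersetCard, c₀.card_S]
      calc Nat.choose s t * t ^ t ≤ s ^ t * t ^ t :=
            Nat.mul_le_mul_right _ (Nat.choose_le_pow s t)
        _ = (s * t) ^ t := (mul_pow s t t).symm
        _ < goodᶜ.card := by omega
    obtain ⟨T₀, hT₀mem, hT₀⟩ :=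
      Finset.exists_lt_card_fiber_of_mul_lt_card_of_maps_to hmaps hlt
    obtain ⟨hT₀sub, hT₀card⟩ := Finset.mem_powersetCard.mp hT₀mem
    set F := goodᶜ.filter (fun i => T i = T₀) with hFdef
    have hFbad : ∀ i ∈ F, i ∈ goodᶜ ∧ T i = T₀ := fun i hi => Finset.mem_filter.mp hi
    have hvinj : Set.InjOn v ↑F := by
      intro i hi j hj hij
      by_contra hne
      have h1 := (hTv i (hFbad i hi).1).2.2.1
      have h2 := (hTv j (hFbad j hj).1).2.2.1
      rw [hij] at h1
      exact Set.disjoint_left.mp (c₀.disj i j hne) h1 h2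
    have hW : t ^ t < (F.image v).card := by
      rw [Finset.card_image_of_injOn hvinj]; exact hT₀
    have hbound : Nat.choose ((t - 1) + (t - 1)) (t - 1) ≤ (F.image v).card := by
      calc Nat.choose ((t - 1) + (t - 1)) (t - 1)
          ≤ Nat.choose (2 * (t - 1) + 1) (t - 1) := Nat.choose_le_choose _ (by omega)
        _ ≤ 4 ^ (t - 1) := Nat.choose_middle_le_pow _
        _ ≤ t ^ t := four_pow_le_self_pow t ht
        _ ≤ (F.image v).card := le_of_lt hW
    rcases myRamsey G ((t - 1) + (t - 1)) (t - 1) (t - 1) le_rfl (F.image v) hbound with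
      ⟨K, hKW, hKcard, hKp⟩ | ⟨I, hIW, hIcard, hIind⟩
    · exact Or.inl ⟨K, hKp, by omega⟩
    · refine Or.inr (Or.inl ⟨T₀, I, ?_, hT₀card, by omega, ?_, hIind, ?_⟩)
      · rw [Finset.disjoint_left]
        intro x hx hxI
        obtain ⟨i, hiF, hvi⟩ := Finset.mem_image.mp (hIW hxI)
        have hmem := (hTv i (hFbad i hiF).1).2.2.1
        rw [hvi] at hmem
        exact c₀.sep x (hT₀sub hx) i hmem
      · exact fun x hx y hy => c₀.stable x (hT₀sub hx) y (hT₀sub hy)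
      · intro x hx y hy
        obtain ⟨i, hiF, hvi⟩ := Finset.mem_image.mp (hIW hy)
        rw [← hvi]
        apply (hTv i (hFbad i hiF).1).2.2.2
        rw [(hFbad i hiF).2]
        exact hx
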